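/- Let ħ ∈ ℂ with ħ ≠ 0, let R ∈ ℝ with |ħ|²·R² = 1, let α, β ∈ ℂ, and let h > 0 be a real number. Consider the 2×2 complex matrices M = !![0, ħ⁻¹·α + ħ·R²·(conj β)·h⁻²; ħ⁻¹·β + ħ·R²·(conj α)·h², 0] and C = !![0, h⁻¹; h, 0]. Then M·C = C·(conj M), where conj M denotes the entrywise complex conjugate of M. -/

import Mathlib

open Matrix

/-- If `|ħ|²R² = 1`, the off-diagonal connection form `M` of `∇_{ħ,R}` intertwines the
real structure `C = !![0, h⁻¹; h, 0]`: `M·C = C·(conj M)`, so the holonomy is real. -/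
theorem real_structure_preserved (hbar : ℂ) (hhbar : hbar ≠ 0) (R : ℝ)
    (hR : ‖hbar‖ ^ 2 * R ^ 2 = 1) (α β : ℂ) (h : ℝ) (hh : 0 < h) :
    (!![0, hbar⁻¹ * α + hbar * (R : ℂ) ^ 2 * starRingEnd ℂ β * ((h : ℂ) ^ 2)⁻¹;
        hbar⁻¹ * β + hbar * (R : ℂ) ^ 2 * starRingEnd ℂ α * (h : ℂ) ^ 2, 0] :
      Matrix (Fin 2) (Fin 2) ℂ) * !![0, (h : ℂ)⁻¹; (h : ℂ), 0] =
    (!![0, (h : ℂ)⁻¹; (h : ℂ), 0] : Matrix (Fin 2) (Fin 2) ℂ) *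
      (!![0, hbar⁻¹ * α + hbar * (R : ℂ) ^ 2 * starRingEnd ℂ β * ((h : ℂ) ^ 2)⁻¹;
          hbar⁻¹ * β + hbar * (R : ℂ) ^ 2 * starRingEnd ℂ α * (h : ℂ) ^ 2, 0] :
        Matrix (Fin 2) (Fin 2) ℂ).map (starRingEnd ℂ) := by
  have hc : starRingEnd ℂ hbar ≠ 0 := by simpa using hhbar
  have hhC : (h : ℂ) ≠ 0 := by exact_mod_cast hh.ne'
  have key : hbar * starRingEnd ℂ hbar * (R : ℂ) ^ 2 = 1 := by
    have h1 : ((‖hbar‖ : ℂ)) ^ 2 * (R : ℂ) ^ 2 = 1 := by exact_mod_cast hR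
    rw [show ((‖hbar‖ : ℂ)) ^ 2 = hbar * starRingEnd ℂ hbar by
      rw [Complex.mul_conj]; exact_mod_cast (Complex.sq_norm hbar)] at h1
    exact h1
  ext i j
  fin_cases i <;> fin_cases j <;> simp [Matrix.mul_apply, Fin.sum_univ_succ]
  · field_simp
    linear_combination (hbar * starRingEnd ℂ β -
      α * (h : ℂ) ^ 2 * starRingEnd ℂ hbar) * key
  · field_simp
    linear_combination (hbar * starRingEnd ℂ α * (h : ℂ) ^ 2 -
      β * starRingEnd ℂ hbar) * key
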